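/- Let A be a finite alphabet equipped with a linear order. Every ultimately periodic left-infinite word w over A can be written in exactly one way as w = u⁻∞ z, where u is a Lyndon word over A, z ∈ A*, and u is not a prefix of z. -/

import Mathlib

/- Left-infinite words over an alphabet `A` are functions `ℕ → A`;
`w n` is the letter at distance `n` from the right end. -/

variable {A : Type*}

/-- `app w z` appends the finite word `z` on the right of the left-infinite word `w`. -/
def app (w : ℕ → A) (z : List A) : ℕ → A :=
  fun n => if h : n < z.length then z.get ⟨z.length - 1 - n, by omega⟩ else w (n - z.length)

/-- `suff m w` is the suffix of length `m` of `w`: the finite word `w (m-1) ⋯ w 1 w 0`. -/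
def suff (m : ℕ) (w : ℕ → A) : List A :=
  List.ofFn (fun i : Fin m => w (m - 1 - i))

/-- Two left-infinite words are confinal if they share a common left-infinite prefix. -/
def Confinal (v₁ v₂ : ℕ → A) : Prop :=
  ∃ (y : ℕ → A) (z₁ z₂ : List A), v₁ = app y z₁ ∧ v₂ = app y z₂

/-- `negPow u hu` is the periodic left-infinite word `u⁻∞ = ⋯uuu`. -/
def negPow (u : List A) (hu : u ≠ []) : ℕ → A :=
  fun n => u.get ⟨u.length - 1 - n % u.length, by
    have h : u.length ≠ 0 := fun h0 => hu (List.length_eq_zero_iff.mp h0)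
    omega⟩

/-- A left-infinite word is periodic if it is `u⁻∞` for some nonempty finite word `u`. -/
def Periodic (w : ℕ → A) : Prop :=
  ∃ (u : List A) (hu : u ≠ []), w = negPow u hu

/-- The gap between two finite words `w₁, w₂`:
`g(w₁,w₂) = min {|u| : u ∈ A⁺, ∃ v ∈ A⁺, w₁u = vw₂ or w₂u = vw₁}`. -/
noncomputable def gap (w₁ w₂ : List A) : ℕ :=
  sInf {n : ℕ | ∃ u v : List A, u ≠ [] ∧ v ≠ [] ∧ u.length = n ∧
    (w₁ ++ u = v ++ w₂ ∨ w₂ ++ u = v ++ w₁)}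

/-- `listPow u n` is the `n`-fold concatenation `uⁿ`. -/
def listPow (u : List A) : ℕ → List A
  | 0 => []
  | n + 1 => u ++ listPow u n

/-- A nonempty finite word is primitive if it is not of the form `xⁿ` with `n ≥ 2`. -/
def Primitive (u : List A) : Prop :=
  u ≠ [] ∧ ∀ (x : List A) (n : ℕ), 2 ≤ n → u ≠ listPow x n

/-- `tk k w`: the longest suffix of `w` of length at most `k`. -/
def tk (k : ℕ) (w : List A) : List A := w.drop (w.length - k)

/-- `ik k w`: the longest prefix of `w` of length at most `k`. -/
def ik (k : ℕ) (w : List A) : List A := w.take k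

/-- The factor of `w = a₁⋯aₙ` of length `M` ending at the (1-indexed) position `m`:
`a_{m-M+1} ⋯ a_m`. -/
def factorAt (M : ℕ) (w : List A) (m : ℕ) : List A := (w.take m).drop (m - M)

/-- `m` is a bound of `w` w.r.t. the set `B ⊆ A^M` of borders. -/
def IsBound (B : Set (List A)) (M : ℕ) (w : List A) (m : ℕ) : Prop :=
  M ≤ m ∧ m ≤ w.length ∧ factorAt M w m ∈ B

/- The splitting point of `w`: its last bound if it has one, and `|w|` otherwise. -/
open Classical in
noncomputable def splitPoint (B : Set (List A)) (M : ℕ) (w : List A) : ℕ :=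
  if ∃ m, IsBound B M w m then sSup {m | IsBound B M w m} else w.length

/-- `Phik k w`: the sequence of all factors of `w` of length `k+1`, in the order
in which they occur in `w`. -/
def Phik (k : ℕ) (w : List A) : List (List A) :=
  List.ofFn (fun i : Fin (w.length - k) => (w.drop i).take (k + 1))

/-- A Lyndon word: a primitive word lexicographically minimal in its conjugacy class. -/
def IsLyndon [LinearOrder A] (u : List A) : Prop :=
  Primitive u ∧ ∀ w₁ w₂ : List A, u = w₁ ++ w₂ → u ≤ w₂ ++ w₁

/-- `A^{-∞}`: the disjoint union of the nonempty finite words and the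
left-infinite words over `A`. -/
def Ainf (A : Type*) := {l : List A // l ≠ []} ⊕ (ℕ → A)

/-- Multiplication on `A^{-∞}`: concatenation of finite words; appending a finite word
on the right of a left-infinite word; left-infinite words are right zeros. -/
def mulAinf : Ainf A → Ainf A → Ainf A
  | Sum.inl u, Sum.inl v => Sum.inl ⟨u.1 ++ v.1, fun h => u.2 (List.append_eq_nil_iff.mp h).1⟩
  | Sum.inl _, Sum.inr w => Sum.inr w
  | Sum.inr w, Sum.inl z => Sum.inr (app w z.1)
  | Sum.inr _, Sum.inr w => Sum.inr w

section StmtAux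

variable {A : Type*}

/-- `w` is `d`-periodic from position `m` on. -/
def EvP (w : ℕ → A) (m d : ℕ) : Prop := ∀ n, m ≤ n → w (n + d) = w n

theorem evp_mono {w : ℕ → A} {m m' d : ℕ} (h : EvP w m d) (hm : m ≤ m') : EvP w m' d :=
  fun n hn => h n (le_trans hm hn)

theorem evp_iter {w : ℕ → A} {m d : ℕ} (h : EvP w m d) (q : ℕ) :
    ∀ n, m ≤ n → w (n + q * d) = w n := by
  induction q with
  | zero => simp
  | succ q ih =>
    intro n hn
    have e : n + (q + 1) * d = (n + q * d) + d := by ring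
    rw [e, h _ (by omega), ih n hn]

theorem evp_mod {w : ℕ → A} {m d : ℕ} (h : EvP w m d) (hd : 0 < d) {n : ℕ} (hn : m ≤ n) :
    w n = w (m + (n - m) % d) := by
  have h1 : n = m + (n - m) % d + ((n - m) / d) * d := by
    have e1 := Nat.mod_add_div (n - m) d
    have e2 : d * ((n - m) / d) = ((n - m) / d) * d := Nat.mul_comm _ _
    omega
  calc w n = w (m + (n - m) % d + ((n - m) / d) * d) := by rw [← h1]
    _ = w (m + (n - m) % d) := evp_iter h _ _ (by omega)

/-- The factor of `w` of length `d` ending just below position `m`. -/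
def blk (w : ℕ → A) (d m : ℕ) : List A := List.ofFn fun i : Fin d => w (m + d - 1 - i)

theorem blk_length (w : ℕ → A) (d m : ℕ) : (blk w d m).length = d := by simp [blk]

theorem blk_ne (w : ℕ → A) {d : ℕ} (hd : 0 < d) (m : ℕ) : blk w d m ≠ [] := by
  intro h
  have h2 := blk_length w d m
  rw [h, List.length_nil] at h2
  omega

theorem blk_getElem (w : ℕ → A) (d m : ℕ) {i : ℕ} (h : i < (blk w d m).length) :
    (blk w d m)[i] = w (m + d - 1 - i) := by simp [blk]

theorem blk_rot {w : ℕ → A} {d m : ℕ} (h : EvP w m d) {t : ℕ} (ht : t ≤ d) :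
    blk w d (m + t) = (blk w d m).drop (d - t) ++ (blk w d m).take (d - t) := by
  apply List.ext_getElem
  · simp only [List.length_append, List.length_drop, List.length_take, blk_length]
    omega
  intro i h1 h2
  rw [blk_getElem]
  rcases lt_or_ge i t with hi | hi
  · rw [List.getElem_append_left (by simp [blk_length]; omega), List.getElem_drop, blk_getElem]
    have e1 : m + d - 1 - (d - t + i) = m + t - 1 - i := by
      have : i < d := by rw [blk_length] at h1; omega
      omega
    have e2 : m + t + d - 1 - i = (m + t - 1 - i) + d := by omega
    rw [e1, e2, h _ (by omega)]
  · rw [List.getElem_append_right (by simp [blk_length]; omega)]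
    rw [List.getElem_take, blk_getElem]
    have hid : i < d := by rw [blk_length] at h1; omega
    simp only [List.length_drop, blk_length]
    congr 1
    omega

theorem blk_shift_mul {w : ℕ → A} {d m : ℕ} (h : EvP w m d) (k : ℕ) :
    blk w d (m + k * d) = blk w d m := by
  induction k with
  | zero => simp
  | succ k ih =>
    have e : m + (k + 1) * d = (m + k * d) + d := by ring
    have h2 : EvP w (m + k * d) d := evp_mono h (by omega)
    rw [e, blk_rot h2 (le_refl d)]
    simp [ih]

theorem listPow_length (x : List A) (n : ℕ) : (listPow x n).length = n * x.length := by
  induction n with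
  | zero => simp [listPow]
  | succ n ih => simp [listPow, ih]; ring

theorem listPow_getElem {x : List A} (hx : x ≠ []) (n i : ℕ) (h : i < (listPow x n).length) :
    (listPow x n)[i] = x[i % x.length]'(Nat.mod_lt _ (List.length_pos_iff.mpr hx)) := by
  induction n generalizing i with
  | zero => simp [listPow] at h
  | succ n ih =>
    show (x ++ listPow x n)[i]'(by simpa [listPow] using h) = _
    rcases lt_or_ge i x.length with hi | hi
    · rw [List.getElem_append_left hi]
      congr 1
      exact (Nat.mod_eq_of_lt hi).symm
    · rw [List.getElem_append_right hi, ih]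
      congr 1
      conv_rhs => rw [show i = (i - x.length) + x.length by omega]
      rw [Nat.add_mod_right]

theorem suff_length (m : ℕ) (w : ℕ → A) : (suff m w).length = m := by simp [suff]

theorem suff_getElem (m : ℕ) (w : ℕ → A) {j : ℕ} (h : j < (suff m w).length) :
    (suff m w)[j] = w (m - 1 - j) := by simp [suff]

theorem app_ge (w : ℕ → A) (z : List A) {n : ℕ} (h : z.length ≤ n) :
    app w z n = w (n - z.length) := dif_neg (by omega)

theorem app_lt (w : ℕ → A) (z : List A) {n : ℕ} (h : n < z.length) :
    app w z n = z[z.length - 1 - n]'(by omega) := by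
  rw [app, dif_pos h]
  rfl

theorem negPow_eq (u : List A) (hu : u ≠ []) (n : ℕ) :
    negPow u hu n = u[u.length - 1 - n % u.length]'(by
      have := List.length_pos_iff.mpr hu; omega) := rfl

theorem negPow_add (u : List A) (hu : u ≠ []) (n : ℕ) :
    negPow u hu (n + u.length) = negPow u hu n := by
  simp only [negPow_eq, Nat.add_mod_right]

theorem negPow_small (u : List A) (hu : u ≠ []) {n : ℕ} (hn : n < u.length) :
    negPow u hu n = u[u.length - 1 - n]'(by omega) := by
  simp only [negPow_eq, Nat.mod_eq_of_lt hn]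

theorem rep_suff {w y : ℕ → A} {z : List A} (h : w = app y z) : z = suff z.length w := by
  apply List.ext_getElem (by simp [suff_length])
  intro j h1 h2
  rw [suff_getElem, h, app_lt _ _ (show z.length - 1 - j < z.length by omega)]
  congr 1
  omega

theorem rep_evp {w : ℕ → A} {u : List A} {hu : u ≠ []} {z : List A}
    (h : w = app (negPow u hu) z) : EvP w z.length u.length := by
  intro n hn
  have hul := List.length_pos_iff.mpr hu
  rw [h, app_ge _ _ (by omega), app_ge _ _ hn]
  have e : n + u.length - z.length = (n - z.length) + u.length := by omega
  rw [e, negPow_add]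

theorem rep_getElem {w : ℕ → A} {u : List A} {hu : u ≠ []} {z : List A}
    (h : w = app (negPow u hu) z) {i : ℕ} (hi : i < u.length) :
    u[i] = w (z.length + u.length - 1 - i) := by
  have hul := List.length_pos_iff.mpr hu
  rw [h, app_ge _ _ (by omega)]
  have e : z.length + u.length - 1 - i - z.length = u.length - 1 - i := by omega
  rw [e, negPow_small _ _ (by omega)]
  congr 1
  omega

theorem negPow_blk {w : ℕ → A} {d : ℕ} (hd : 0 < d) {m : ℕ} {hb : blk w d m ≠ []} (n : ℕ) :
    negPow (blk w d m) hb n = w (m + n % d) := by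
  rw [negPow_eq, blk_getElem]
  have hl := blk_length w d m
  have hr : n % (blk w d m).length < (blk w d m).length := Nat.mod_lt _ (by omega)
  have hmod : n % (blk w d m).length = n % d := by rw [hl]
  have hr2 : n % d < d := by omega
  congr 1
  omega

theorem repr_of_evp {w : ℕ → A} {d m : ℕ} (hd : 0 < d) (h : EvP w m d)
    (hb : blk w d m ≠ []) :
    w = app (negPow (blk w d m) hb) (suff m w) := by
  funext n
  rcases lt_or_ge n m with hn | hn
  · rw [app_lt _ _ (by rw [suff_length]; exact hn), suff_getElem]
    congr 1
    simp only [suff_length]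
    omega
  · rw [app_ge _ _ (by rw [suff_length]; exact hn), suff_length]
    rw [evp_mod h hd hn, negPow_blk hd]

theorem app_absorb (u : List A) (hu : u ≠ []) (t : List A) :
    app (negPow u hu) (u ++ t) = app (negPow u hu) t := by
  funext n
  have hul : 0 < u.length := List.length_pos_iff.mpr hu
  rcases lt_or_ge n t.length with hn | hn
  · rw [app_lt _ _ (by simp; omega), app_lt _ _ hn]
    rw [List.getElem_append_right (by simp; omega)]
    congr 1
    simp
    omega
  · rcases lt_or_ge n (t.length + u.length) with hn2 | hn2
    · rw [app_lt _ _ (by simp; omega), app_ge _ _ hn]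
      rw [List.getElem_append_left (by simp; omega), negPow_small _ _ (by omega)]
      congr 1
      simp
      omega
    · rw [app_ge _ _ (by simp; omega), app_ge _ _ hn]
      have e : n - t.length = (n - (u ++ t).length) + u.length := by simp; omega
      rw [e, negPow_add]

theorem strip (u : List A) (hu : u ≠ []) (z : List A) : ∃ z' : List A,
    ¬ u <+: z' ∧ app (negPow u hu) z = app (negPow u hu) z' := by
  generalize hn : z.length = n
  induction n using Nat.strong_induction_on generalizing z with
  | _ n ih =>
    by_cases hpre : u <+: z
    · obtain ⟨t, rfl⟩ := hpre
      have hul : 0 < u.length := List.length_pos_iff.mpr hu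
      obtain ⟨z', h1, h2⟩ := ih t.length (by simp at hn; omega) t rfl
      exact ⟨z', h1, by rw [app_absorb, h2]⟩
    · exact ⟨z, hpre, rfl⟩

theorem arith2 {e : ℕ} {d i i' : ℕ} (hi : i < d) (hi' : i' < d)
    (h : i % e = i' % e) : (d - 1 - i) % e = (d - 1 - i') % e := by
  rcases le_total i i' with hle | hle
  · obtain ⟨q, hq⟩ := (Nat.modEq_iff_dvd' hle).mp h
    rw [show d - 1 - i = (d - 1 - i') + (i' - i) by omega, hq,
      Nat.add_mul_mod_self_left]
  · obtain ⟨q, hq⟩ := (Nat.modEq_iff_dvd' hle).mp h.symm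
    rw [show d - 1 - i' = (d - 1 - i) + (i - i') by omega, hq,
      Nat.add_mul_mod_self_left]

theorem small_period {w : ℕ → A} {m d e : ℕ} (hd : 0 < d) (hdvd : e ∣ d)
    (hP : EvP w m d)
    (hblock : ∀ i i', i < d → i' < d → i % e = i' % e → w (m + i) = w (m + i')) :
    EvP w m e := by
  intro n hn
  rw [evp_mod hP hd hn, evp_mod hP hd (show m ≤ n + e by omega)]
  apply hblock _ _ (Nat.mod_lt _ hd) (Nat.mod_lt _ hd)
  rw [Nat.mod_mod_of_dvd _ hdvd, Nat.mod_mod_of_dvd _ hdvd]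
  rw [show n + e - m = (n - m) + e by omega, Nat.add_mod_right]

theorem eq_listPow {u : List A} {e : ℕ} (he : 0 < e) (hul : 0 < u.length)
    (hdvd : e ∣ u.length)
    (h : ∀ i i' (_ : i < u.length) (_ : i' < u.length), i % e = i' % e → u[i] = u[i']) :
    u = listPow (u.drop (u.length - e)) (u.length / e) := by
  obtain ⟨k, hk⟩ := hdvd
  have hk1 : 1 ≤ k := by
    rcases Nat.eq_zero_or_pos k with h0 | h1
    · subst h0; rw [Nat.mul_zero] at hk; omega
    · exact h1
  have hek : e ≤ u.length := by
    calc e = e * 1 := (mul_one e).symm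
    _ ≤ e * k := Nat.mul_le_mul_left e hk1
    _ = u.length := hk.symm
  have hx : (u.drop (u.length - e)).length = e := by simp; omega
  have hxne : u.drop (u.length - e) ≠ [] := by
    intro hc; rw [hc, List.length_nil] at hx; omega
  have hq : u.length / e = k := by rw [hk, Nat.mul_div_cancel_left _ he]
  rw [hq]
  apply List.ext_getElem
  · rw [listPow_length, hx, hk, Nat.mul_comm]
  intro i h1 h2
  rw [listPow_getElem hxne _ _ h2, List.getElem_drop]
  refine h i (u.length - e + i % (u.drop (u.length - e)).length) h1
    (by rw [hx]; have := Nat.mod_lt i he; omega) ?hm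
  case hm =>
    rw [hx]
    have hce : e * (k - 1) + e = e * k := by
      cases k with
      | zero => omega
      | succ k => simp [Nat.mul_succ]
    rw [show u.length - e + i % e = i % e + e * (k - 1) by omega,
      Nat.add_mul_mod_self_left, Nat.mod_mod_of_dvd _ dvd_rfl]

end StmtAux

/-- every ultimately periodic left-infinite word `w` can be written in
exactly one way as `w = u⁻∞ z` with `u` a Lyndon word and `u` not a prefix of `z`. -/
theorem stmt12 [Fintype A] [LinearOrder A] (w : ℕ → A)
    (hw : ∃ (u : List A) (hu : u ≠ []) (v : List A), w = app (negPow u hu) v) :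
    ∃! p : List A × List A, ∃ hp : p.1 ≠ [],
      IsLyndon p.1 ∧ ¬ p.1 <+: p.2 ∧ w = app (negPow p.1 hp) p.2 := by
  classical
  obtain ⟨u₀, hu₀, v₀, hw₀⟩ := hw
  set S : Set ℕ := {p | 0 < p ∧ ∃ N, EvP w N p} with hSdef
  have hu₀S : u₀.length ∈ S := ⟨List.length_pos_iff.mpr hu₀, v₀.length, rep_evp hw₀⟩
  have hdS : sInf S ∈ S := Nat.sInf_mem ⟨_, hu₀S⟩
  set d := sInf S with hddef
  obtain ⟨hd0, N, hN⟩ := hdS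
  have hdle : ∀ p ∈ S, d ≤ p := fun p hp => Nat.sInf_le hp
  have hdvd : ∀ p ∈ S, d ∣ p := by
    intro p hp
    obtain ⟨hp0, Np, hNp⟩ := hp
    by_contra hnd
    have hr : 0 < p % d := Nat.pos_of_ne_zero fun h => hnd (Nat.dvd_of_mod_eq_zero h)
    have hmem : p % d ∈ S := by
      refine ⟨hr, max N Np, fun n hn => ?_⟩
      have e1 : w (n + p % d + p / d * d) = w (n + p % d) := evp_iter hN _ _ (by omega)
      have e2 : n + p % d + p / d * d = n + p := by
        have := Nat.mod_add_div p d
        have h3 : d * (p / d) = p / d * d := Nat.mul_comm _ _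
        omega
      have e3 : w (n + p) = w n := hNp n (by omega)
      rw [← e3, ← e2, e1]
    have h1 := hdle _ hmem
    have h2 := Nat.mod_lt p hd0
    omega
  -- Core: any Lyndon representation has period exactly `d` and block form.
  have rep_core : ∀ (u : List A) (hu : u ≠ []) (z : List A), IsLyndon u →
      w = app (negPow u hu) z →
      u.length = d ∧ u = blk w d z.length ∧ EvP w z.length d := by
    intro u hu z hly hrep
    have hul : 0 < u.length := List.length_pos_iff.mpr hu
    have hevL : EvP w z.length u.length := rep_evp hrep
    have hLS : u.length ∈ S := ⟨hul, z.length, hevL⟩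
    have hdL : d ∣ u.length := hdvd _ hLS
    have key : ∀ j j', j < u.length → j' < u.length → j' ≤ j → d ∣ j - j' →
        w (z.length + j) = w (z.length + j') := by
      intro j j' hj hj' hle hdj
      obtain ⟨q, hq⟩ := hdj
      have e1 : w (z.length + j + N * u.length) = w (z.length + j) :=
        evp_iter hevL N _ (by omega)
      have e2 : w (z.length + j' + N * u.length) = w (z.length + j') :=
        evp_iter hevL N _ (by omega)
      have e3 : w (z.length + j' + N * u.length + q * d)
          = w (z.length + j' + N * u.length) := by
        apply evp_iter hN
        have h6 : N * 1 ≤ N * u.length := Nat.mul_le_mul (le_refl N) hul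
        omega
      have e4 : z.length + j + N * u.length = z.length + j' + N * u.length + q * d := by
        have h5 : d * q = q * d := Nat.mul_comm _ _
        omega
      rw [← e1, e4, e3, e2]
    have hcong : ∀ i i' (_ : i < u.length) (_ : i' < u.length),
        i % d = i' % d → u[i] = u[i'] := by
      intro i i' hi hi' hmod
      have g1 : u[i]'hi = w (z.length + (u.length - 1 - i)) := by
        rw [rep_getElem hrep hi]; congr 1; omega
      have g2 : u[i']'hi' = w (z.length + (u.length - 1 - i')) := by
        rw [rep_getElem hrep hi']; congr 1; omega
      rw [g1, g2]
      rcases le_total i i' with hle | hle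
      · apply key _ _ (by omega) (by omega) (by omega)
        obtain ⟨q, hq⟩ := (Nat.modEq_iff_dvd' hle).mp hmod
        exact ⟨q, by omega⟩
      · exact (key _ _ (by omega) (by omega) (by omega)
          (by obtain ⟨q, hq⟩ := (Nat.modEq_iff_dvd' hle).mp hmod.symm
              exact ⟨q, by omega⟩)).symm
    have hLd : u.length = d := by
      by_contra hne
      obtain ⟨k, hk⟩ := hdL
      have hk2 : 2 ≤ k := by
        by_contra h2
        push_neg at h2
        interval_cases k
        · rw [Nat.mul_zero] at hk; omega
        · rw [Nat.mul_one] at hk; omega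
      have heq := eq_listPow hd0 hul ⟨k, hk⟩ hcong
      have hq : u.length / d = k := by rw [hk, Nat.mul_div_cancel_left _ hd0]
      rw [hq] at heq
      exact hly.1.2 _ k hk2 heq
    have hblk : u = blk w d z.length := by
      apply List.ext_getElem (by rw [blk_length, hLd])
      intro i h1 h2
      rw [rep_getElem hrep h1, blk_getElem]
      congr 1
      omega
    refine ⟨hLd, hblk, ?_⟩
    intro n hn
    have h7 := hevL n hn
    rwa [hLd] at h7
  -- Uniqueness (ordered version).
  have uniq2 : ∀ (u₁ : List A) (hu₁ : u₁ ≠ []) (z₁ : List A)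
      (u₂ : List A) (hu₂ : u₂ ≠ []) (z₂ : List A),
      IsLyndon u₁ → ¬ u₁ <+: z₁ → w = app (negPow u₁ hu₁) z₁ →
      IsLyndon u₂ → ¬ u₂ <+: z₂ → w = app (negPow u₂ hu₂) z₂ →
      z₁.length ≤ z₂.length → u₁ = u₂ ∧ z₁ = z₂ := by
    intro u₁ hu₁ z₁ u₂ hu₂ z₂ hly₁ _hnp₁ hrep₁ hly₂ hnp₂ hrep₂ hlen
    obtain ⟨hL₁, hb₁, hP₁⟩ := rep_core u₁ hu₁ z₁ hly₁ hrep₁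
    obtain ⟨hL₂, hb₂, hP₂⟩ := rep_core u₂ hu₂ z₂ hly₂ hrep₂
    set t := z₂.length - z₁.length with htdef
    have hsplit : z₂.length = (z₁.length + t % d) + t / d * d := by
      have := Nat.mod_add_div t d
      have h5 : d * (t / d) = t / d * d := Nat.mul_comm _ _
      omega
    have hb2' : u₂ = blk w d (z₁.length + t % d) := by
      rw [hb₂]
      conv_lhs => rw [hsplit]
      exact blk_shift_mul (evp_mono hP₁ (by omega)) _
    have hmodlt : t % d < d := Nat.mod_lt _ hd0
    have ht'0 : t % d = 0 := by
      by_contra h0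
      have hpos : 0 < t % d := Nat.pos_of_ne_zero h0
      have hrot : blk w d (z₁.length + t % d) =
          (blk w d z₁.length).drop (d - t % d) ++ (blk w d z₁.length).take (d - t % d) :=
        blk_rot hP₁ (by omega)
      have hsp : u₁ = (blk w d z₁.length).take (d - t % d)
          ++ (blk w d z₁.length).drop (d - t % d) := by
        rw [List.take_append_drop]; exact hb₁
      have h12 : u₁ ≤ u₂ := by
        rw [hb2', hrot]
        exact hly₁.2 _ _ hsp
      have h21 : u₂ ≤ u₁ := by
        have h2 : u₂ = (blk w d z₁.length).drop (d - t % d)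
            ++ (blk w d z₁.length).take (d - t % d) := by rw [hb2', hrot]
        have h3 := hly₂.2 _ _ h2
        rwa [← hsp] at h3
      have hueq' : u₁ = u₂ := le_antisymm h12 h21
      have hbb : blk w d (z₁.length + t % d) = blk w d z₁.length := by
        rw [← hb2', ← hueq', hb₁]
      have hblkpt : ∀ s, s < d → w (z₁.length + s + t % d) = w (z₁.length + s) := by
        intro s hs
        have e1 := List.getElem_of_eq hbb (show d - 1 - s < (blk w d (z₁.length + t % d)).length by rw [blk_length]; omega)
        rw [blk_getElem, blk_getElem] at e1
        have e2 : z₁.length + t % d + d - 1 - (d - 1 - s) = z₁.length + s + t % d := by omega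
        have e3 : z₁.length + d - 1 - (d - 1 - s) = z₁.length + s := by omega
        rwa [e2, e3] at e1
      have hmem : t % d ∈ S := by
        refine ⟨hpos, z₁.length, fun n hn => ?_⟩
        have e1 : w n = w (z₁.length + (n - z₁.length) % d) := evp_mod hP₁ hd0 hn
        have e4 : w (z₁.length + (n - z₁.length) % d + t % d + (n - z₁.length) / d * d)
            = w (z₁.length + (n - z₁.length) % d + t % d) :=
          evp_iter hP₁ _ _ (by omega)
        have e5 : n + t % d
            = z₁.length + (n - z₁.length) % d + t % d + (n - z₁.length) / d * d := by
          have := Nat.mod_add_div (n - z₁.length) d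
          have h5 : d * ((n - z₁.length) / d) = (n - z₁.length) / d * d := Nat.mul_comm _ _
          omega
        rw [e5, e4, hblkpt _ (Nat.mod_lt _ hd0), ← e1]
      have h8 := hdle _ hmem
      omega
    have hueq : u₁ = u₂ := by
      rw [hb₁, hb2', ht'0, Nat.add_zero]
    have hdvdt : d ∣ t := Nat.dvd_of_mod_eq_zero ht'0
    have ht0 : t = 0 := by
      by_contra h0
      obtain ⟨q, hq⟩ := hdvdt
      have hq1 : 1 ≤ q := by
        rcases Nat.eq_zero_or_pos q with h1 | h1
        · rw [h1, Nat.mul_zero] at hq; omega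
        · exact h1
      have hdm : d ≤ z₂.length := by
        have h5 : d * 1 ≤ d * q := Nat.mul_le_mul (le_refl d) hq1
        omega
      apply hnp₂
      rw [← hueq]
      refine ⟨z₂.drop d, ?_⟩
      have hz₂ : z₂ = suff z₂.length w := rep_suff hrep₂
      apply List.ext_getElem
      · simp only [List.length_append, List.length_drop, hL₁]
        omega
      intro j h1 h2
      rcases lt_or_ge j d with hj | hj
      · rw [List.getElem_append_left (show j < u₁.length by rw [hL₁]; exact hj)]
        have g1 : u₁[j]'(show j < u₁.length by rw [hL₁]; exact hj)
            = w (z₁.length + d - 1 - j) := by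
          have g0 := List.getElem_of_eq hb₁ (show j < u₁.length by rw [hL₁]; exact hj)
          rw [g0, blk_getElem]
        have g2 : z₂[j]'h2 = w (z₂.length - 1 - j) := by
          have g0 := List.getElem_of_eq hz₂ h2
          rw [g0, suff_getElem]
        rw [g1, g2]
        have hc : d * (q - 1) + d = d * q := by
          cases q with
          | zero => omega
          | succ q => simp [Nat.mul_succ]
        have h6 : (q - 1) * d = d * (q - 1) := Nat.mul_comm _ _
        have e5 : z₂.length - 1 - j = (z₁.length + d - 1 - j) + (q - 1) * d := by omega
        rw [e5]
        exact (evp_iter hP₁ (q - 1) _ (by omega)).symm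
      · rw [List.getElem_append_right (show u₁.length ≤ j by rw [hL₁]; exact hj)]
        rw [List.getElem_drop]
        congr 1
        rw [hL₁]
        omega
    refine ⟨hueq, ?_⟩
    have hz1 : z₁ = suff z₁.length w := rep_suff hrep₁
    have hz2 : z₂ = suff z₂.length w := rep_suff hrep₂
    have hlen2 : z₁.length = z₂.length := by omega
    rw [hz1, hz2, hlen2]
  -- Existence.
  obtain ⟨t₀, ht₀, hmin⟩ := Finset.exists_min_image (Finset.range d)
    (fun t => blk w d (N + t)) ⟨0, Finset.mem_range.mpr hd0⟩
  have hPm : EvP w (N + t₀) d := evp_mono hN (by omega)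
  have hune : blk w d (N + t₀) ≠ [] := blk_ne w hd0 _
  have hlyn : IsLyndon (blk w d (N + t₀)) := by
    constructor
    · refine ⟨hune, ?_⟩
      intro x k hk2 heq
      have hlen : d = k * x.length := by
        rw [← blk_length w d (N + t₀), heq, listPow_length]
      have hxne : x ≠ [] := by
        intro hx
        rw [hx] at hlen
        simp only [List.length_nil, Nat.mul_zero] at hlen
        omega
      have hxl : 0 < x.length := List.length_pos_iff.mpr hxne
      have hedvd : x.length ∣ d := ⟨k, by rw [hlen, Nat.mul_comm]⟩
      have helt : x.length < d := by
        have h5 : 2 * x.length ≤ k * x.length := Nat.mul_le_mul hk2 (le_refl _)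
        omega
      have g : ∀ s, s < d → w (N + t₀ + s)
          = x[(d - 1 - s) % x.length]'(Nat.mod_lt _ hxl) := by
        intro s hs
        calc w (N + t₀ + s)
            = (blk w d (N + t₀))[d - 1 - s]'(by rw [blk_length]; omega) := by
              rw [blk_getElem]; congr 1; omega
          _ = (listPow x k)[d - 1 - s]'(by
              rw [listPow_length, ← hlen]; omega) := List.getElem_of_eq heq _
          _ = x[(d - 1 - s) % x.length]'(Nat.mod_lt _ hxl) := listPow_getElem hxne _ _ _
      have hblock : ∀ i i', i < d → i' < d → i % x.length = i' % x.length →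
          w (N + t₀ + i) = w (N + t₀ + i') := by
        intro i i' hi hi' hmod
        rw [g i hi, g i' hi']
        congr 1
        exact arith2 hi hi' hmod
      have hmem : x.length ∈ S := ⟨hxl, N + t₀, small_period hd0 hedvd hPm hblock⟩
      have h9 := hdle _ hmem
      omega
    · intro w₁ w₂ hsp
      have hlw : w₁.length + w₂.length = d := by
        rw [← blk_length w d (N + t₀), hsp, List.length_append]
      have ht : w₂.length ≤ d := by omega
      have hrot := blk_rot hPm ht
      have hw₁ : (blk w d (N + t₀)).take (d - w₂.length) = w₁ := by
        rw [hsp, show d - w₂.length = w₁.length by omega, List.take_left]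
      have hw₂ : (blk w d (N + t₀)).drop (d - w₂.length) = w₂ := by
        rw [hsp, show d - w₂.length = w₁.length by omega, List.drop_left]
      rw [hw₁, hw₂] at hrot
      rw [← hrot]
      have hsplit2 : N + t₀ + w₂.length
          = (N + (t₀ + w₂.length) % d) + (t₀ + w₂.length) / d * d := by
        have := Nat.mod_add_div (t₀ + w₂.length) d
        have h5 : d * ((t₀ + w₂.length) / d) = (t₀ + w₂.length) / d * d := Nat.mul_comm _ _
        omega
      rw [hsplit2, blk_shift_mul (evp_mono hN (by omega))]
      exact hmin _ (Finset.mem_range.mpr (Nat.mod_lt _ hd0))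
  obtain ⟨z, hznp, hzeq⟩ := strip (blk w d (N + t₀)) hune (suff (N + t₀) w)
  have hrep : w = app (negPow (blk w d (N + t₀)) hune) z := by
    rw [← hzeq]
    exact repr_of_evp hd0 hPm hune
  refine ⟨(blk w d (N + t₀), z), ⟨hune, hlyn, hznp, hrep⟩, ?_⟩
  rintro ⟨u', z'⟩ ⟨hu', hly', hnp', hrep'⟩
  rcases le_total z'.length z.length with hle | hle
  · obtain ⟨h1, h2⟩ := uniq2 u' hu' z' _ hune z hly' hnp' hrep' hlyn hznp hrep hle
    simp only [Prod.mk.injEq]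
    exact ⟨h1, h2⟩
  · obtain ⟨h1, h2⟩ := uniq2 _ hune z u' hu' z' hlyn hznp hrep hly' hnp' hrep' hle
    simp only [Prod.mk.injEq]
    exact ⟨h1.symm, h2.symm⟩
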